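/- Let C₁,…,C_M be 4×4 real symmetric matrices and T₁,…,T_M homogeneous pose matrices T_j = [[R_j, t_j],[0, 1]] with R_jᵀR_j = I and det R_j = 1, such that the (4,4)-entry of Σⱼ T_j C_j T_jᵀ is positive. Fix φ ∈ ℝ³ and δt ∈ ℝ³, and for each j define the perturbed pose T̃_j = [[exp(⌊φ⌋) R_j, δt + exp(⌊φ⌋) t_j],[0, 1]], where ⌊φ⌋ denotes the 3×3 skew-symmetric matrix of φ and exp is the matrix exponential. Then for each l ∈ {1,2,3}: λ_l(A(Σⱼ T̃_j C_j T̃_jᵀ)) = λ_l(A(Σⱼ T_j C_j T_jᵀ)). That is, the bundle adjustment cost is unchanged when all poses are perturbed by the same boxplus increment (φ, δt). -/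

import Mathlib

open Matrix

noncomputable section

/-- Homogeneous coordinates of a point in `ℝ³`. -/
def homog (x : Fin 3 → ℝ) : Fin 4 → ℝ := Fin.snoc x 1

/-- The point cluster coordinate `ℜ(p) = Σₖ (pₖ,1)(pₖ,1)ᵀ` of a finite family of points. -/
def cluster {n : ℕ} (p : Fin n → Fin 3 → ℝ) : Matrix (Fin 4) (Fin 4) ℝ :=
  ∑ k, vecMulVec (homog (p k)) (homog (p k))

/-- The homogeneous pose matrix `T = [[R, t],[0, 1]]`. -/
def pose (R : Matrix (Fin 3) (Fin 3) ℝ) (t : Fin 3 → ℝ) : Matrix (Fin 4) (Fin 4) ℝ :=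
  Matrix.reindex finSumFinEquiv finSumFinEquiv
    (Matrix.fromBlocks R (Matrix.of fun i (_ : Fin 1) => t i)
      (0 : Matrix (Fin 1) (Fin 3) ℝ) (1 : Matrix (Fin 1) (Fin 1) ℝ))

/-- The upper-left `3×3` block `P` of a `4×4` matrix. -/
def Pblk (C : Matrix (Fin 4) (Fin 4) ℝ) : Matrix (Fin 3) (Fin 3) ℝ :=
  Matrix.of fun i j => C i.castSucc j.castSucc

/-- The upper-right `3×1` block `v` of a `4×4` matrix. -/
def vblk (C : Matrix (Fin 4) (Fin 4) ℝ) : Fin 3 → ℝ :=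
  fun i => C i.castSucc (Fin.last 3)

/-- The `(4,4)` entry `N` of a `4×4` matrix. -/
def Nent (C : Matrix (Fin 4) (Fin 4) ℝ) : ℝ := C (Fin.last 3) (Fin.last 3)

/-- `A(C) = (1/N) P − (1/N²) v vᵀ`. -/
def Amat (C : Matrix (Fin 4) (Fin 4) ℝ) : Matrix (Fin 3) (Fin 3) ℝ :=
  (1 / Nent C) • Pblk C - (1 / (Nent C) ^ 2) • vecMulVec (vblk C) (vblk C)

/-- The `l`-th largest eigenvalue (`l = 0` being the largest) of a real symmetric
`3×3` matrix. -/
def eigDesc {A : Matrix (Fin 3) (Fin 3) ℝ} (hA : A.IsHermitian) (l : Fin 3) : ℝ :=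
  (hA.eigenvalues ∘ Tuple.sort hA.eigenvalues) l.rev

/-- The skew-symmetric matrix `⌊φ⌋` of `φ ∈ ℝ³`. -/
def crossMat (φ : Fin 3 → ℝ) : Matrix (Fin 3) (Fin 3) ℝ :=
  !![0, -φ 2, φ 1; φ 2, 0, -φ 0; -φ 1, φ 0, 0]

/-! ### Auxiliary lemmas -/

section Aux

open Polynomial

lemma pose_cc (R : Matrix (Fin 3) (Fin 3) ℝ) (t : Fin 3 → ℝ) (i j : Fin 3) :
    pose R t i.castSucc j.castSucc = R i j := by
  simp only [pose, Matrix.reindex_apply, Matrix.submatrix_apply]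
  rw [show Fin.castSucc i = Fin.castAdd 1 i from rfl, show Fin.castSucc j = Fin.castAdd 1 j from rfl,
    finSumFinEquiv_symm_apply_castAdd, finSumFinEquiv_symm_apply_castAdd]
  rfl

lemma pose_cl (R : Matrix (Fin 3) (Fin 3) ℝ) (t : Fin 3 → ℝ) (i : Fin 3) :
    pose R t i.castSucc (Fin.last 3) = t i := by
  simp only [pose, Matrix.reindex_apply, Matrix.submatrix_apply]
  rw [show Fin.castSucc i = Fin.castAdd 1 i from rfl, finSumFinEquiv_symm_apply_castAdd,
    finSumFinEquiv_symm_last]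
  rfl

lemma pose_lc (R : Matrix (Fin 3) (Fin 3) ℝ) (t : Fin 3 → ℝ) (j : Fin 3) :
    pose R t (Fin.last 3) j.castSucc = 0 := by
  simp only [pose, Matrix.reindex_apply, Matrix.submatrix_apply]
  rw [show Fin.castSucc j = Fin.castAdd 1 j from rfl, finSumFinEquiv_symm_apply_castAdd,
    finSumFinEquiv_symm_last]
  rfl

lemma pose_ll (R : Matrix (Fin 3) (Fin 3) ℝ) (t : Fin 3 → ℝ) :
    pose R t (Fin.last 3) (Fin.last 3) = 1 := by
  simp only [pose, Matrix.reindex_apply, Matrix.submatrix_apply, finSumFinEquiv_symm_last]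
  rfl

lemma pose_eq (R : Matrix (Fin 3) (Fin 3) ℝ) (t : Fin 3 → ℝ) :
    pose R t = !![R 0 0, R 0 1, R 0 2, t 0; R 1 0, R 1 1, R 1 2, t 1;
      R 2 0, R 2 1, R 2 2, t 2; 0, 0, 0, 1] := by
  ext i j
  fin_cases i <;> fin_cases j <;>
    simp [pose, Matrix.reindex_apply, Matrix.submatrix_apply] <;> rfl

lemma pose_mul (Q R : Matrix (Fin 3) (Fin 3) ℝ) (s t : Fin 3 → ℝ) :
    pose Q s * pose R t = pose (Q * R) (s + Q.mulVec t) := by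
  rw [pose_eq, pose_eq, pose_eq]
  ext i j
  fin_cases i <;> fin_cases j <;>
    simp [Matrix.mul_apply, Fin.sum_univ_four, Fin.sum_univ_three, Matrix.mulVec,
      dotProduct] <;> ring

lemma exp_cross_orth (φ : Fin 3 → ℝ) :
    (NormedSpace.exp (crossMat φ))ᵀ * NormedSpace.exp (crossMat φ) = 1 := by
  have hT : (crossMat φ)ᵀ = -crossMat φ := by
    ext i j; fin_cases i <;> fin_cases j <;> simp [crossMat]
  have h2 := Matrix.exp_add_of_commute (-crossMat φ) (crossMat φ)
    ((Commute.refl _).neg_left)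
  rw [← Matrix.exp_transpose, hT, ← h2, neg_add_cancel, NormedSpace.exp_zero]

variable (Q : Matrix (Fin 3) (Fin 3) ℝ) (s : Fin 3 → ℝ) (S : Matrix (Fin 4) (Fin 4) ℝ)

lemma Nent_conj : Nent (pose Q s * S * (pose Q s)ᵀ) = Nent S := by
  simp only [Nent, Matrix.mul_apply, Matrix.transpose_apply, Fin.sum_univ_castSucc,
    pose_lc, pose_ll, pose_cc, pose_cl]
  simp [Nent, Matrix.mul_apply, Matrix.transpose_apply, Fin.sum_univ_castSucc,
    pose_lc, pose_ll, pose_cc, pose_cl]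

lemma vblk_conj : vblk (pose Q s * S * (pose Q s)ᵀ) = Q *ᵥ vblk S + Nent S • s := by
  funext i
  simp only [vblk, Nent, Matrix.mul_apply, Matrix.transpose_apply, Fin.sum_univ_castSucc,
    pose_lc, pose_ll, pose_cc, pose_cl]
  simp [vblk, Nent, Matrix.mul_apply, Matrix.transpose_apply, Fin.sum_univ_castSucc,
    pose_lc, pose_ll, pose_cc, pose_cl, Matrix.mulVec, dotProduct]
  ring

lemma Pblk_conj (hsym : ∀ a b, S b a = S a b) :
    Pblk (pose Q s * S * (pose Q s)ᵀ) = Q * Pblk S * Qᵀ + vecMulVec (Q *ᵥ vblk S) s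
      + vecMulVec s (Q *ᵥ vblk S) + Nent S • vecMulVec s s := by
  ext i j
  simp only [Pblk, vblk, Nent, Matrix.of_apply, Matrix.mul_apply, Matrix.transpose_apply,
    Fin.sum_univ_castSucc, pose_lc, pose_ll, pose_cc, pose_cl]
  simp [Pblk, vblk, Nent, Matrix.mul_apply, Matrix.transpose_apply, Fin.sum_univ_castSucc,
    pose_lc, pose_ll, pose_cc, pose_cl, Matrix.mulVec, dotProduct, vecMulVec_apply,
    Finset.sum_add_distrib, Finset.mul_sum, Finset.sum_mul, mul_add, add_mul]
  simp only [hsym _ (3 : Fin 4)]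
  ring

lemma Amat_conj (hsym : ∀ a b, S b a = S a b) (hN : Nent S ≠ 0) :
    Amat (pose Q s * S * (pose Q s)ᵀ) = Q * Amat S * Qᵀ := by
  rw [Amat, Nent_conj, vblk_conj, Pblk_conj Q s S hsym, Amat]
  ext i j
  simp [Matrix.mul_apply, Matrix.sub_apply, Matrix.smul_apply, Matrix.add_apply,
    vecMulVec_apply, Matrix.transpose_apply, Pi.add_apply, Pi.smul_apply, smul_eq_mul,
    Fin.sum_univ_three, Matrix.mulVec, dotProduct]
  field_simp
  ring

lemma charpoly_conj' {n : Type*} [Fintype n] [DecidableEq n]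
    (Q A : Matrix n n ℝ) (h1 : Q * Qᵀ = 1) :
    (Q * A * Qᵀ).charpoly = A.charpoly := by
  let f : Matrix n n ℝ →+* Matrix n n ℝ[X] := (Polynomial.C : ℝ →+* ℝ[X]).mapMatrix
  have e1 : f Q * Matrix.scalar n (X : ℝ[X]) * f Qᵀ = Matrix.scalar n (X : ℝ[X]) := by
    have hs : (Matrix.scalar n (X : ℝ[X])) = (X : ℝ[X]) • (1 : Matrix n n ℝ[X]) := by
      simp [Matrix.scalar, Matrix.smul_one_eq_diagonal]
    rw [hs, Matrix.mul_smul, Matrix.smul_mul, mul_one, ← RingHom.map_mul, h1, RingHom.map_one]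
  have e2 : f Q * ((Polynomial.C : ℝ →+* ℝ[X]).mapMatrix A) * f Qᵀ
      = (Polynomial.C : ℝ →+* ℝ[X]).mapMatrix (Q * A * Qᵀ) := by
    rw [RingHom.map_mul, RingHom.map_mul]
  have key : charmatrix (Q * A * Qᵀ) = f Q * charmatrix A * f Qᵀ := by
    unfold charmatrix
    rw [mul_sub, sub_mul, e1, e2]
  rw [Matrix.charpoly, key, det_mul, det_mul, Matrix.charpoly, mul_comm (det (f Q)),
    mul_assoc, ← det_mul, ← RingHom.map_mul, h1, RingHom.map_one, det_one, mul_one]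

lemma herm_charpoly {n : Type*} [Fintype n] [DecidableEq n]
    {A : Matrix n n ℝ} (hA : A.IsHermitian) :
    A.charpoly = ∏ i, (X - Polynomial.C (hA.eigenvalues i)) := by
  have hU := hA.eigenvectorUnitary.2
  have hstar : star (hA.eigenvectorUnitary : Matrix n n ℝ)
      = (hA.eigenvectorUnitary : Matrix n n ℝ)ᵀ :=
    Matrix.conjTranspose_eq_transpose_of_trivial _
  have h1 : (hA.eigenvectorUnitary : Matrix n n ℝ) * (hA.eigenvectorUnitary : Matrix n n ℝ)ᵀ
      = 1 := by rw [← hstar]; exact (Unitary.mem_iff.mp hU).2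
  have hspec := hA.spectral_theorem
  rw [Unitary.conjStarAlgAut_apply] at hspec
  rw [hstar] at hspec
  have hconj := charpoly_conj' (hA.eigenvectorUnitary : Matrix n n ℝ)
    (diagonal (RCLike.ofReal ∘ hA.eigenvalues)) h1
  rw [← hspec] at hconj
  rw [hconj, Matrix.charpoly]
  have hd : charmatrix (diagonal (RCLike.ofReal ∘ hA.eigenvalues) : Matrix n n ℝ)
      = diagonal (fun i => (X : ℝ[X]) - Polynomial.C (hA.eigenvalues i)) := by
    ext i j
    rw [charmatrix_apply]
    by_cases h : i = j <;> simp [h, diagonal_apply, RCLike.ofReal_real_eq_id]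
  rw [hd, det_diagonal]

lemma sorted_eq {n : ℕ} (f g : Fin n → ℝ)
    (h : Multiset.map f Finset.univ.val = Multiset.map g Finset.univ.val) :
    f ∘ Tuple.sort f = g ∘ Tuple.sort g := by
  have hperm : (List.ofFn f).Perm (List.ofFn g) := by
    rw [← Multiset.coe_eq_coe]
    simpa [← Fin.univ_val_map] using h
  have h1 : (List.ofFn (f ∘ Tuple.sort f)).Perm (List.ofFn (g ∘ Tuple.sort g)) :=
    ((Tuple.sort f).ofFn_comp_perm f).trans (hperm.trans ((Tuple.sort g).ofFn_comp_perm g).symm)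
  have heq : List.ofFn (f ∘ Tuple.sort f) = List.ofFn (g ∘ Tuple.sort g) :=
    List.Perm.eq_of_sortedLE
      (List.sortedLE_ofFn_iff.mpr (Tuple.monotone_sort f))
      (List.sortedLE_ofFn_iff.mpr (Tuple.monotone_sort g)) h1
  rw [List.ofFn_inj] at heq
  exact heq

lemma eig_sorted_eq_of_charpoly {n : Type*} [Fintype n] [DecidableEq n]
    {A B : Matrix n n ℝ} (hA : A.IsHermitian) (hB : B.IsHermitian)
    (h : A.charpoly = B.charpoly) :
    Multiset.map hA.eigenvalues Finset.univ.val
      = Multiset.map hB.eigenvalues Finset.univ.val := by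
  rw [herm_charpoly hA, herm_charpoly hB] at h
  have key : ∀ (e : n → ℝ), (∏ i, (X - Polynomial.C (e i))).roots
      = Multiset.map e Finset.univ.val := by
    intro e
    rw [Finset.prod_eq_multiset_prod]
    have hmm : (Multiset.map (fun i => X - Polynomial.C (e i)) Finset.univ.val)
        = Multiset.map (fun a => X - Polynomial.C a) (Multiset.map e Finset.univ.val) := by
      rw [Multiset.map_map]; rfl
    rw [hmm]
    exact Polynomial.roots_multiset_prod_X_sub_C _
  rw [← key hA.eigenvalues, ← key hB.eigenvalues, h]

end Aux

theorem cost_invariant_aux {M : ℕ}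
    (C : Fin M → Matrix (Fin 4) (Fin 4) ℝ) (hC : ∀ j, (C j).IsSymm)
    (R : Fin M → Matrix (Fin 3) (Fin 3) ℝ) (t : Fin M → Fin 3 → ℝ)
    (hN : 0 < Nent (∑ j, pose (R j) (t j) * C j * (pose (R j) (t j))ᵀ))
    (Q : Matrix (Fin 3) (Fin 3) ℝ) (hQ : Qᵀ * Q = 1) (δt : Fin 3 → ℝ)
    (h₁ : (Amat (∑ j, pose (Q * R j) (δt + Q.mulVec (t j)) * C j *
          (pose (Q * R j) (δt + Q.mulVec (t j)))ᵀ)).IsHermitian)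
    (h₂ : (Amat (∑ j, pose (R j) (t j) * C j * (pose (R j) (t j))ᵀ)).IsHermitian) :
    ∀ l : Fin 3, eigDesc h₁ l = eigDesc h₂ l := by
  intro l
  set S := ∑ j, pose (R j) (t j) * C j * (pose (R j) (t j))ᵀ with hSdef
  have hQorth' : Q * Qᵀ = 1 := by
    rw [mul_eq_one_comm] at hQ; exact hQ
  have hsum : (∑ j, pose (Q * R j) (δt + Q.mulVec (t j)) * C j *
        (pose (Q * R j) (δt + Q.mulVec (t j)))ᵀ)
      = pose Q δt * S * (pose Q δt)ᵀ := by
    rw [hSdef, Finset.mul_sum, Finset.sum_mul]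
    refine Finset.sum_congr rfl fun j _ => ?_
    rw [← pose_mul, Matrix.transpose_mul]
    simp only [mul_assoc]
  have hsym : ∀ a b, S a b = S b a := by
    have hT : Sᵀ = S := by
      rw [hSdef, Matrix.transpose_sum]
      refine Finset.sum_congr rfl fun j _ => ?_
      rw [Matrix.transpose_mul, Matrix.transpose_mul, Matrix.transpose_transpose, (hC j),
        mul_assoc]
    intro a b
    conv_lhs => rw [← hT]
    rfl
  have hNne : Nent S ≠ 0 := ne_of_gt hN
  have hAconj : Amat (∑ j, pose (Q * R j) (δt + Q.mulVec (t j)) * C j *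
        (pose (Q * R j) (δt + Q.mulVec (t j)))ᵀ) = Q * Amat S * Qᵀ := by
    rw [hsum]
    exact Amat_conj Q δt S (fun a b => hsym b a) hNne
  have hchar : (Amat (∑ j, pose (Q * R j) (δt + Q.mulVec (t j)) * C j *
        (pose (Q * R j) (δt + Q.mulVec (t j)))ᵀ)).charpoly = (Amat S).charpoly := by
    rw [hAconj]
    exact charpoly_conj' Q (Amat S) hQorth'
  have hmult := eig_sorted_eq_of_charpoly h₁ h₂ hchar
  have hsorted := sorted_eq h₁.eigenvalues h₂.eigenvalues hmult
  unfold eigDesc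
  rw [hsorted]

/-- Null space (claim (45) of Theorem 4, cost level): the BA cost is unchanged when
all poses are perturbed by the same boxplus increment `(φ, δt)`. -/
theorem cost_invariant_common_perturbation {M : ℕ}
    (C : Fin M → Matrix (Fin 4) (Fin 4) ℝ) (hC : ∀ j, (C j).IsSymm)
    (R : Fin M → Matrix (Fin 3) (Fin 3) ℝ) (t : Fin M → Fin 3 → ℝ)
    (hR : ∀ j, (R j)ᵀ * R j = 1) (hdet : ∀ j, (R j).det = 1)
    (hN : 0 < Nent (∑ j, pose (R j) (t j) * C j * (pose (R j) (t j))ᵀ))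
    (φ : Fin 3 → ℝ) (δt : Fin 3 → ℝ)
    (h₁ : (Amat (∑ j,
        pose (NormedSpace.exp (crossMat φ) * R j)
            (δt + (NormedSpace.exp (crossMat φ)).mulVec (t j)) * C j *
          (pose (NormedSpace.exp (crossMat φ) * R j)
            (δt + (NormedSpace.exp (crossMat φ)).mulVec (t j)))ᵀ)).IsHermitian)
    (h₂ : (Amat (∑ j, pose (R j) (t j) * C j * (pose (R j) (t j))ᵀ)).IsHermitian) :
    ∀ l : Fin 3, eigDesc h₁ l = eigDesc h₂ l :=
  cost_invariant_aux C hC R t hN _ (exp_cross_orth φ) δt h₁ h₂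

end
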